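/- Let C be a coalgebra over a field k and let X and Y be right invariant linear endomorphisms of C. Then ε_C ∘ (X ∘ Y) = (ε_C ∘ Y) * (ε_C ∘ X), where * denotes the convolution product on the dual space C* = Hom_k(C, k); moreover ε_C ∘ id = ε_C. In other words, the map sending a right invariant operator X to the linear form ε_C ∘ X is an anti-morphism of algebras from right invariant operators (under composition) to the convolution algebra C*. -/
import Mathlib


open TensorProduct

/-- For right invariant endomorphisms `X`, `Y` of a coalgebra `C`,
`ε ∘ (X ∘ Y) = (ε ∘ Y) * (ε ∘ X)` (convolution), and `ε ∘ id = ε`. -/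
theorem counit_comp_rightInvariant_antihom
    (k C : Type*) [Field k] [AddCommGroup C] [Module k C] [Coalgebra k C]
    (X Y : C →ₗ[k] C)
    (hX : Coalgebra.comul ∘ₗ X = TensorProduct.map X LinearMap.id ∘ₗ Coalgebra.comul)
    (hY : Coalgebra.comul ∘ₗ Y = TensorProduct.map Y LinearMap.id ∘ₗ Coalgebra.comul) :
    (Coalgebra.counit ∘ₗ (X ∘ₗ Y) : C →ₗ[k] k) =
      LinearMap.mul' k k ∘ₗ
        TensorProduct.map (Coalgebra.counit ∘ₗ Y) (Coalgebra.counit ∘ₗ X) ∘ₗ Coalgebra.comul ∧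
    (Coalgebra.counit ∘ₗ (LinearMap.id : C →ₗ[k] C) : C →ₗ[k] k) = Coalgebra.counit := by
  refine ⟨?_, LinearMap.comp_id _⟩
  have h1 : TensorProduct.map ((Coalgebra.counit : C →ₗ[k] k) ∘ₗ Y)
        ((Coalgebra.counit : C →ₗ[k] k) ∘ₗ X)
      = (LinearMap.lTensor k ((Coalgebra.counit : C →ₗ[k] k) ∘ₗ X) ∘ₗ
          LinearMap.rTensor C (Coalgebra.counit : C →ₗ[k] k)) ∘ₗ
          TensorProduct.map Y LinearMap.id := by
    ext c
    simp
  have h3 : LinearMap.rTensor C (Coalgebra.counit : C →ₗ[k] k) ∘ₗ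
      (TensorProduct.map Y LinearMap.id ∘ₗ Coalgebra.comul) = TensorProduct.mk k k C 1 ∘ₗ Y := by
    rw [← hY, ← LinearMap.comp_assoc, Coalgebra.rTensor_counit_comp_comul]
  symm
  rw [h1]
  simp only [LinearMap.comp_assoc]
  rw [h3]
  ext c
  simp
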